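/- Let A be a k×k strictly upper triangular integer matrix and let P_A be the set of integer sequences λ = (λ_1,...,λ_k) satisfying λ_i ≥ Σ_{j>i} A[i,j]·λ_j for all 1 ≤ i ≤ k. Then every element of P_A has all entries nonnegative if and only if every entry of B = (I-A)^{-1} is nonnegative. -/

import Mathlib

/-- every solution of `λ ≥ Aλ` (componentwise) is nonnegative iff every entry
of `B = (I - A)⁻¹ = I + A + ⋯ + A^(k-1)` is nonnegative. -/
theorem stmt_1 (k : ℕ) (A : Matrix (Fin k) (Fin k) ℤ)
    (hA : ∀ i j : Fin k, j ≤ i → A i j = 0) :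
    (∀ lam : Fin k → ℤ, (∀ i, ∑ j, A i j * lam j ≤ lam i) → ∀ i, 0 ≤ lam i) ↔
    (∀ i j : Fin k, 0 ≤ (∑ m ∈ Finset.range k, A ^ m) i j) := by
  set B := ∑ m ∈ Finset.range k, A ^ m with hBdef
  have hpow : ∀ m : ℕ, ∀ i j : Fin k, (j : ℕ) < (i : ℕ) + m → (A ^ m) i j = 0 := by
    intro m
    induction m with
    | zero =>
        intro i j h
        rw [pow_zero]
        exact Matrix.one_apply_ne (by intro he; rw [he] at h; omega)
    | succ n ih =>
        intro i j h
        rw [pow_succ, Matrix.mul_apply]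
        apply Finset.sum_eq_zero
        intro l _
        by_cases hl : (l : ℕ) < (i : ℕ) + n
        · rw [ih i l hl, zero_mul]
        · rw [hA l j (by omega), mul_zero]
  have hAk : A ^ k = 0 := by
    ext i j
    rw [hpow k i j (by omega)]
    rfl
  have h1 : (1 - A) * B = 1 := by
    rw [← neg_sub A 1, neg_mul, mul_geom_sum, hAk]
    simp
  have h2 : B * (1 - A) = 1 := by
    rw [← neg_sub A 1, mul_neg, geom_sum_mul, hAk]
    simp
  constructor
  · intro h i j
    refine h (fun l => B l j) ?_ i
    intro i'
    show ∑ l, A i' l * B l j ≤ B i' j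
    have key : B i' j - ∑ l, A i' l * B l j = (1 : Matrix (Fin k) (Fin k) ℤ) i' j := by
      rw [← h1]
      simp [Matrix.sub_apply, Matrix.mul_apply, Matrix.one_apply, sub_mul, ite_mul,
        Finset.sum_sub_distrib, Finset.sum_ite_eq]
    have hone : (0 : ℤ) ≤ (1 : Matrix (Fin k) (Fin k) ℤ) i' j := by
      rw [Matrix.one_apply]
      split <;> norm_num
    omega
  · intro hB lam hlam i
    set mu : Fin k → ℤ := fun l => lam l - ∑ j, A l j * lam j with hmu
    have hmu0 : ∀ l, 0 ≤ mu l := fun l => by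
      have := hlam l; simp [hmu]; omega
    have hlam_eq : lam = B.mulVec mu := by
      have h3 : (1 - A).mulVec lam = mu := by
        funext l
        simp [Matrix.mulVec, Matrix.sub_apply, dotProduct, sub_mul,
          Finset.sum_sub_distrib, Matrix.one_apply, ite_mul, Finset.sum_ite_eq, hmu]
      calc lam = (1 : Matrix (Fin k) (Fin k) ℤ).mulVec lam := by simp
        _ = (B * (1 - A)).mulVec lam := by rw [h2]
        _ = B.mulVec ((1 - A).mulVec lam) := by rw [Matrix.mulVec_mulVec]
        _ = B.mulVec mu := by rw [h3]
    rw [hlam_eq]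
    show 0 ≤ ∑ l, B i l * mu l
    apply Finset.sum_nonneg
    intro l _
    exact mul_nonneg (hB i l) (hmu0 l)
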